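/- arXiv:0902.2645 — 6 statements merged into one kernel-verified Lean document; each statement's English description precedes it below -/
import Mathlib

section
/- Let n ≥ 1 and ε > 0. There exist positive constants κ₁ and κ₂ depending only on n (and independent of ε) such that for every u ∈ ℝⁿ one has (κ₂/ε)·F_ε(u) ≤ ‖g_ε(u)‖² ≤ (κ₁/ε)·F_ε(u), where ‖·‖ is the Euclidean norm. -/
noncomputable def fe (ε z : ℝ) : ℝ := if z ≤ ε then 0 else ε⁻¹ * (z - ε) ^ 2

noncomputable def fe' (ε z : ℝ) : ℝ := if z ≤ ε then 0 else 2 * ε⁻¹ * (z - ε)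

noncomputable def Fe (n : ℕ) (ε : ℝ) (u : EuclideanSpace ℝ (Fin n)) : ℝ :=
  fe ε (∑ i, u i - 1) + ∑ i, fe ε (-(u i))

noncomputable def ge (n : ℕ) (ε : ℝ) (u : EuclideanSpace ℝ (Fin n)) :
    EuclideanSpace ℝ (Fin n) :=
  WithLp.toLp 2 (fun i => fe' ε (∑ j, u j - 1) - fe' ε (-(u i)))

lemma fe'_sq (ε z : ℝ) : (fe' ε z) ^ 2 = 4 * ε⁻¹ * fe ε z := by
  unfold fe fe'
  split <;> ring

lemma fe'_nonneg {ε z : ℝ} (hε : 0 < ε) : 0 ≤ fe' ε z := by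
  unfold fe'
  split
  · exact le_refl 0
  · rename_i h
    push_neg at h
    have h2 : (0:ℝ) ≤ 2 * ε⁻¹ := by positivity
    exact mul_nonneg h2 (by linarith)

theorem stmt_0 (n : ℕ) (hn : 1 ≤ n) :
    ∃ κ₁ κ₂ : ℝ, 0 < κ₁ ∧ 0 < κ₂ ∧
      ∀ ε : ℝ, 0 < ε → ∀ u : EuclideanSpace ℝ (Fin n),
        (κ₂ / ε) * Fe n ε u ≤ ‖ge n ε u‖ ^ 2 ∧
        ‖ge n ε u‖ ^ 2 ≤ (κ₁ / ε) * Fe n ε u := by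
  have hn' : (1 : ℝ) ≤ (n : ℝ) := by exact_mod_cast hn
  refine ⟨8 * n, 2 / (2 * n + 1), by positivity, by positivity, ?_⟩
  intro ε hε u
  set a := fe' ε (∑ j, u j - 1) with ha
  set b : Fin n → ℝ := fun i => fe' ε (-(u i)) with hb
  have ha0 : 0 ≤ a := fe'_nonneg hε
  have hb0 : ∀ i, 0 ≤ b i := fun i => fe'_nonneg hε
  have hnorm : ‖ge n ε u‖ ^ 2 = ∑ i, (a - b i) ^ 2 := by
    rw [EuclideanSpace.norm_eq, Real.sq_sqrt (by positivity)]
    refine Finset.sum_congr rfl fun i _ => ?_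
    rw [Real.norm_eq_abs, sq_abs]
    rfl
  have hQ : a ^ 2 + ∑ i, (b i) ^ 2 = 4 * ε⁻¹ * Fe n ε u := by
    unfold Fe
    rw [mul_add, Finset.mul_sum, fe'_sq]
    congr 1
    exact Finset.sum_congr rfl fun i _ => fe'_sq ε _
  set S := ∑ i, (b i) ^ 2 with hS
  have hS0 : 0 ≤ S := Finset.sum_nonneg fun i _ => sq_nonneg _
  set T := ∑ i, (a - b i) ^ 2 with hT
  have hT0 : 0 ≤ T := Finset.sum_nonneg fun i _ => sq_nonneg _
  -- upper bound : T ≤ 2n a² + 2S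
  have hup : T ≤ 2 * n * a ^ 2 + 2 * S := by
    calc T ≤ ∑ i : Fin n, (2 * a ^ 2 + 2 * (b i) ^ 2) := by
          refine Finset.sum_le_sum fun i _ => ?_
          nlinarith [sq_nonneg (a + b i)]
      _ = (n : ℝ) * (2 * a ^ 2) + 2 * S := by
          rw [Finset.sum_add_distrib, Finset.sum_const, Finset.card_univ, Fintype.card_fin,
            ← Finset.mul_sum, nsmul_eq_mul, hS]
      _ = 2 * n * a ^ 2 + 2 * S := by ring
  -- lower bound 1 : a² ≤ T
  have hlow1 : a ^ 2 ≤ T := by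
    rcases eq_or_lt_of_le ha0 with h | h
    · calc a ^ 2 = 0 := by rw [← h]; ring
      _ ≤ T := hT0
    · -- a > 0, so ∑ u > 1 + ε > 0, some u j > 0
      have hsum : ¬ (∑ j, u j - 1 ≤ ε) := by
        intro hle
        rw [ha] at h
        unfold fe' at h
        rw [if_pos hle] at h
        exact lt_irrefl 0 h
      push_neg at hsum
      have hpos : 0 < ∑ j, u j := by linarith
      have hj : ∃ j, 0 < u j := by
        by_contra hc
        push_neg at hc
        have : ∑ j, u j ≤ 0 := Finset.sum_nonpos fun j _ => hc j
        linarith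
      obtain ⟨j, hj⟩ := hj
      have hbj : b j = 0 := by
        simp only [hb]
        unfold fe'
        rw [if_pos (by linarith)]
      calc a ^ 2 = (a - b j) ^ 2 := by rw [hbj]; ring
        _ ≤ T := by
            rw [hT]
            exact Finset.single_le_sum (f := fun i => (a - b i) ^ 2)
              (fun i _ => sq_nonneg _) (Finset.mem_univ j)
  -- lower bound 2 : S/2 - n a² ≤ T
  have hlow2 : S / 2 - n * a ^ 2 ≤ T := by
    have : ∑ i : Fin n, ((b i) ^ 2 / 2 - a ^ 2) ≤ T := by
      refine Finset.sum_le_sum fun i _ => ?_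
      nlinarith [sq_nonneg (2 * a - b i)]
    have heq : ∑ i : Fin n, ((b i) ^ 2 / 2 - a ^ 2) = S / 2 - n * a ^ 2 := by
      rw [Finset.sum_sub_distrib, Finset.sum_const, Finset.card_univ, Fintype.card_fin,
        ← Finset.sum_div]
      push_cast
      ring
    linarith [heq ▸ this]
  -- finish
  have hF : Fe n ε u = ε / 4 * (a ^ 2 + S) := by
    rw [hQ]; field_simp
  constructor
  · rw [hnorm, hF]
    have heq : 2 / (2 * (n:ℝ) + 1) / ε * (ε / 4 * (a ^ 2 + S)) =
        (a ^ 2 + S) / (2 * (2 * n + 1)) := by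
      field_simp
      ring
    rw [heq, div_le_iff₀ (by positivity)]
    nlinarith [mul_le_mul_of_nonneg_left hlow1 (by positivity : (0:ℝ) ≤ 4 * n),
      sq_nonneg a, hS0, hT0]
  · rw [hnorm, hF]
    have heq : (8 * (n:ℝ)) / ε * (ε / 4 * (a ^ 2 + S)) = 2 * n * (a ^ 2 + S) := by
      field_simp
      ring
    rw [heq]
    nlinarith [sq_nonneg a, hS0]
end

section
/- Let n ≥ 1, let g : ℝ → ℝ be monotone nondecreasing, and let u, v ∈ ℝⁿ. Then −(g(∑ᵢ uᵢ) − g(∑ᵢ vᵢ)) · (∑ᵢ sgn(uᵢ − vᵢ)) ≤ (n − 1)·|g(∑ᵢ uᵢ) − g(∑ᵢ vᵢ)|, where sgn denotes the sign function with sgn(0) = 0, sgn(t) = 1 for t > 0 and sgn(t) = −1 for t < 0. -/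
private lemma sign_le_one' (x : ℝ) : Real.sign x ≤ 1 := by
  rcases lt_trichotomy x 0 with h | h | h
  · rw [Real.sign_of_neg h]; norm_num
  · simp [h]
  · rw [Real.sign_of_pos h]

private lemma neg_one_le_sign' (x : ℝ) : -1 ≤ Real.sign x := by
  rcases lt_trichotomy x 0 with h | h | h
  · rw [Real.sign_of_neg h]
  · simp [h]
  · rw [Real.sign_of_pos h]; norm_num

theorem stmt_1 (n : ℕ) (hn : 1 ≤ n) (g : ℝ → ℝ) (hg : Monotone g)
    (u v : Fin n → ℝ) :
    -((g (∑ i, u i) - g (∑ i, v i)) * (∑ i, Real.sign (u i - v i))) ≤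
      ((n : ℝ) - 1) * |g (∑ i, u i) - g (∑ i, v i)| := by
  set D := g (∑ i, u i) - g (∑ i, v i) with hD
  set S := ∑ i, Real.sign (u i - v i) with hS
  have hn1 : (1 : ℝ) ≤ (n : ℝ) := by exact_mod_cast hn
  -- key: if some index has sign ≤ 0, then S ≤ n - 1
  have key : ∀ i : Fin n, Real.sign (u i - v i) ≤ 0 → S ≤ (n : ℝ) - 1 := by
    intro i hi
    have := Finset.sum_erase_add Finset.univ (fun j => Real.sign (u j - v j))
      (Finset.mem_univ i)
    rw [hS, ← this]
    have hrest : ∑ j ∈ Finset.univ.erase i, Real.sign (u j - v j) ≤ (n : ℝ) - 1 := by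
      calc ∑ j ∈ Finset.univ.erase i, Real.sign (u j - v j)
          ≤ ∑ _j ∈ Finset.univ.erase i, (1 : ℝ) :=
            Finset.sum_le_sum fun j _ => sign_le_one' _
        _ = ((Finset.univ.erase i).card : ℝ) := by simp
        _ = (n : ℝ) - 1 := by
            rw [Finset.card_erase_of_mem (Finset.mem_univ i)]
            simp [Nat.cast_sub hn]
    linarith
  have key' : ∀ i : Fin n, 0 ≤ Real.sign (u i - v i) → -((n : ℝ) - 1) ≤ S := by
    intro i hi
    have := Finset.sum_erase_add Finset.univ (fun j => Real.sign (u j - v j))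
      (Finset.mem_univ i)
    rw [hS, ← this]
    have hrest : -((n : ℝ) - 1) ≤ ∑ j ∈ Finset.univ.erase i, Real.sign (u j - v j) := by
      calc -((n:ℝ)-1) = ∑ _j ∈ Finset.univ.erase i, (-1 : ℝ) := by
            rw [Finset.sum_const, Finset.card_erase_of_mem (Finset.mem_univ i)]
            simp [Nat.cast_sub hn]
        _ ≤ _ := Finset.sum_le_sum fun j _ => neg_one_le_sign' _
    linarith
  by_cases h1 : S ≤ (n : ℝ) - 1
  · by_cases h2 : -((n : ℝ) - 1) ≤ S
    · have habs : |S| ≤ (n : ℝ) - 1 := abs_le.mpr ⟨h2, h1⟩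
      calc -(D * S) ≤ |D * S| := neg_le_abs _
        _ = |D| * |S| := abs_mul _ _
        _ ≤ |D| * ((n:ℝ)-1) := mul_le_mul_of_nonneg_left habs (abs_nonneg _)
        _ = ((n:ℝ)-1) * |D| := mul_comm _ _
    · push_neg at h2
      -- S < -(n-1): every sign is negative, so all u i < v i
      have hall : ∀ i, u i < v i := by
        intro i
        by_contra hle
        push_neg at hle
        have : 0 ≤ Real.sign (u i - v i) := by
          have h0 : 0 ≤ u i - v i := by linarith
          rcases eq_or_lt_of_le h0 with h|h
          · simp [← h]
          · rw [Real.sign_of_pos h]; norm_num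
        exact absurd (key' i this) (not_le.mpr h2)
      have hsum : ∑ i, u i ≤ ∑ i, v i :=
        Finset.sum_le_sum fun i _ => (hall i).le
      have hDle : D ≤ 0 := by rw [hD]; simp [hg hsum]
      have hSneg : S < 0 := by linarith
      have : -(D * S) ≤ 0 := by nlinarith
      have : 0 ≤ ((n:ℝ)-1) * |D| := mul_nonneg (by linarith) (abs_nonneg _)
      linarith
  · push_neg at h1
    have hall : ∀ i, v i < u i := by
      intro i
      by_contra hle
      push_neg at hle
      have : Real.sign (u i - v i) ≤ 0 := by
          have h0 : u i - v i ≤ 0 := by linarith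
          rcases eq_or_lt_of_le h0 with h|h
          · simp [h]
          · rw [Real.sign_of_neg h]; norm_num
      exact absurd (key i this) (not_le.mpr h1)
    have hsum : ∑ i, v i ≤ ∑ i, u i :=
      Finset.sum_le_sum fun i _ => (hall i).le
    have hDge : 0 ≤ D := by rw [hD]; simp [hg hsum]
    have hSpos : 0 < S := by linarith
    have : -(D * S) ≤ 0 := by nlinarith
    have : 0 ≤ ((n:ℝ)-1) * |D| := mul_nonneg (by linarith) (abs_nonneg _)
    linarith
end

section
/- Let n ≥ 1 and set θ(n) := (n + 1 − √((n+1)² − 4))/4. Let a ≥ 0 and let c₁, …, cₙ be nonnegative reals such that a > 0 implies cⱼ = 0 for at least one index j. Then ∑_{i=1}^{n} (a − cᵢ)² ≥ θ(n)·(a² + ∑_{i=1}^{n} cᵢ²). -/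
noncomputable def theta (n : ℕ) : ℝ :=
  ((n : ℝ) + 1 - Real.sqrt (((n : ℝ) + 1) ^ 2 - 4)) / 4

lemma theta_facts (n : ℕ) (hn : 1 ≤ n) :
    (4 * theta n ^ 2 - 2 * ((n : ℝ) + 1) * theta n + 1 = 0) ∧
    0 < theta n ∧ theta n ≤ 1 / 2 := by
  have hx : (2 : ℝ) ≤ (n : ℝ) + 1 := by
    have : (1 : ℝ) ≤ (n : ℝ) := by exact_mod_cast hn
    linarith
  set x : ℝ := (n : ℝ) + 1 with hxdef
  have h4 : (0 : ℝ) ≤ x ^ 2 - 4 := by nlinarith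
  set s : ℝ := Real.sqrt (x ^ 2 - 4) with hsdef
  have hs0 : 0 ≤ s := Real.sqrt_nonneg _
  have hs2 : s ^ 2 = x ^ 2 - 4 := Real.sq_sqrt h4
  have hslt : s < x := by
    nlinarith [sq_nonneg (s - x), sq_nonneg (s + x)]
  have htheta : theta n = (x - s) / 4 := rfl
  refine ⟨by rw [htheta]; nlinarith [hs2], by rw [htheta]; linarith, ?_⟩
  rw [htheta]
  nlinarith [hs2, hs0, sq_nonneg (s + x - 2)]

theorem stmt_3 (n : ℕ) (hn : 1 ≤ n) (a : ℝ) (ha : 0 ≤ a) (c : Fin n → ℝ)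
    (hc : ∀ i, 0 ≤ c i) (hvanish : 0 < a → ∃ j, c j = 0) :
    ∑ i, (a - c i) ^ 2 ≥ theta n * (a ^ 2 + ∑ i, (c i) ^ 2) := by
  obtain ⟨hquad, hpos, hhalf⟩ := theta_facts n hn
  set θ := theta n with hθ
  rcases eq_or_lt_of_le ha with h0 | hapos
  · -- a = 0
    have ha0 : a = 0 := h0.symm
    subst ha0
    have hsum : (0:ℝ) ≤ ∑ i, (c i) ^ 2 := Finset.sum_nonneg fun i _ => sq_nonneg _
    have : ∑ i, (0 - c i) ^ 2 = ∑ i, (c i) ^ 2 := by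
      apply Finset.sum_congr rfl; intro i _; ring
    rw [this]
    nlinarith
  · obtain ⟨j, hj⟩ := hvanish hapos
    have hjmem : j ∈ (Finset.univ : Finset (Fin n)) := Finset.mem_univ j
    have hsplit1 : ∑ i, (a - c i) ^ 2
        = (a - c j) ^ 2 + ∑ i ∈ Finset.univ.erase j, (a - c i) ^ 2 :=
      (Finset.add_sum_erase _ _ hjmem).symm
    have hsplit2 : ∑ i, (c i) ^ 2
        = (c j) ^ 2 + ∑ i ∈ Finset.univ.erase j, (c i) ^ 2 :=
      (Finset.add_sum_erase _ _ hjmem).symm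
    have hcard : ((Finset.univ.erase j).card : ℝ) = (n : ℝ) - 1 := by
      rw [Finset.card_erase_of_mem hjmem, Finset.card_univ, Fintype.card_fin]
      have : 1 ≤ n := hn
      push_cast [Nat.cast_sub hn]
      ring
    -- key bound on the erased sum
    have hkey : ∑ i ∈ Finset.univ.erase j, ((a - c i) ^ 2 - θ * (c i) ^ 2)
        ≥ -(1 - θ) * a ^ 2 := by
      rcases Nat.lt_or_ge n 2 with hn1 | hn2
      · -- n = 1, erase is empty
        have hone : n = 1 := le_antisymm (by omega) hn
        subst hone
        have : (Finset.univ.erase j) = ∅ := by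
          apply Finset.eq_empty_of_forall_notMem
          intro i hi
          rw [Finset.mem_erase] at hi
          exact hi.1 (Subsingleton.elim i j)
        rw [this, Finset.sum_empty]
        nlinarith
      · set m : ℝ := (n : ℝ) - 1 with hm
        have hm1 : (1:ℝ) ≤ m := by
          have : (2:ℝ) ≤ (n:ℝ) := by exact_mod_cast hn2
          simp [hm]; linarith
        have hq' : 4 * θ ^ 2 - 2 * (m + 2) * θ + 1 = 0 := by
          have hm2 : (n : ℝ) + 1 = m + 2 := by rw [hm]; ring
          rw [← hm2]; exact hquad
        have hpoint : ∀ i ∈ Finset.univ.erase j,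
            -((1 - θ) * a ^ 2) / m ≤ (a - c i) ^ 2 - θ * (c i) ^ 2 := by
          intro i _
          rw [div_le_iff₀ (by linarith : (0:ℝ) < m)]
          have key : (1 - θ) * (((a - c i) ^ 2 - θ * (c i) ^ 2) * m + (1 - θ) * a ^ 2)
              = m * ((1 - θ) * c i - a) ^ 2 + ((1 - 2 * θ ^ 2) / 2) * a ^ 2 := by
            linear_combination (a ^ 2 / 2) * hq'
          nlinarith [key, mul_nonneg (by linarith : (0:ℝ) ≤ m) (sq_nonneg ((1-θ)*c i - a)),
            mul_nonneg (by nlinarith : (0:ℝ) ≤ (1 - 2*θ^2)/2) (sq_nonneg a)]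
        have hsumle := Finset.sum_le_sum hpoint
        have hconst : ∑ _i ∈ Finset.univ.erase j, (-((1 - θ) * a ^ 2) / m)
            = ((Finset.univ.erase j).card : ℝ) * (-((1 - θ) * a ^ 2) / m) := by
          rw [Finset.sum_const, nsmul_eq_mul]
        rw [hconst, hcard] at hsumle
        have hcancel : m * (-((1 - θ) * a ^ 2) / m) = -(1-θ) * a^2 := by
          field_simp
        linarith [hsumle, hcancel]
      
    have hsum_sub : ∑ i ∈ Finset.univ.erase j, ((a - c i) ^ 2 - θ * (c i) ^ 2)
        = ∑ i ∈ Finset.univ.erase j, (a - c i) ^ 2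
          - θ * ∑ i ∈ Finset.univ.erase j, (c i) ^ 2 := by
      rw [Finset.sum_sub_distrib, Finset.mul_sum]
    rw [hsplit1, hsplit2, hj]
    rw [hsum_sub] at hkey
    nlinarith [hkey]
end

section
/- Let n ≥ 1 and let K ⊆ ℝⁿ be the n-dimensional simplex. Then: (i) for every u ∈ K and every ε > 0, g_ε(u) = 0; and (ii) for every v ∉ K, ‖g_ε(v)‖ → ∞ as ε → 0⁺ (Euclidean norm). -/
def simplexK (n : ℕ) : Set (EuclideanSpace ℝ (Fin n)) :=
  {p | (∀ i, 0 ≤ p i) ∧ ∑ i, p i ≤ 1}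

lemma abs_apply_le_norm {n : ℕ} (x : EuclideanSpace ℝ (Fin n)) (i : Fin n) :
    |x i| ≤ ‖x‖ := by
  rw [EuclideanSpace.norm_eq]
  have h1 : |x i| = Real.sqrt (‖x i‖ ^ 2) := by
    rw [Real.sqrt_sq (norm_nonneg _), Real.norm_eq_abs]
  rw [h1]
  exact Real.sqrt_le_sqrt (Finset.single_le_sum
    (fun j _ => sq_nonneg ‖x j‖) (Finset.mem_univ i))

lemma ge_apply (n : ℕ) (ε : ℝ) (v : EuclideanSpace ℝ (Fin n)) (i : Fin n) :
    ge n ε v i = fe' ε (∑ j, v j - 1) - fe' ε (-(v i)) := rfl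

theorem stmt_7 (n : ℕ) (hn : 1 ≤ n) :
    (∀ u ∈ simplexK n, ∀ ε : ℝ, 0 < ε → ge n ε u = 0) ∧
      ∀ v : EuclideanSpace ℝ (Fin n), v ∉ simplexK n →
        Filter.Tendsto (fun ε => ‖ge n ε v‖) (nhdsWithin 0 (Set.Ioi 0))
          Filter.atTop := by
  constructor
  · intro u hu ε hε
    ext i
    have h1 : ∑ j, u j - 1 ≤ ε := by linarith [hu.2]
    have h2 : -(u i) ≤ ε := by linarith [hu.1 i]
    show ge n ε u i = 0
    rw [ge_apply, fe', fe', if_pos h1, if_pos h2, sub_zero]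
  · intro v hv
    have key : ∃ (i : Fin n) (C δ : ℝ), 0 < C ∧ 0 < δ ∧
        ∀ ε ∈ Set.Ioo (0:ℝ) δ, C / ε - 2 ≤ |ge n ε v i| := by
      set s := ∑ j, v j - 1 with hs
      by_cases hspos : 0 < s
      · have hex : ∃ i, s + v i ≠ 0 := by
          by_contra hall
          push_neg at hall
          have hv' : ∀ i, v i = -s := fun i => by linarith [hall i]
          have hsum : ∑ j, v j = n * (-s) := by
            rw [Finset.sum_congr rfl (fun i _ => hv' i)]
            simp [Finset.sum_const, mul_comm]
          have hn1 : (1:ℝ) ≤ n := by exact_mod_cast hn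
          nlinarith [hs, hsum]
        obtain ⟨i, hi⟩ := hex
        by_cases hvi : 0 ≤ v i
        · refine ⟨i, 2 * s, s, by linarith, hspos, fun ε hε => ?_⟩
          obtain ⟨hε0, hεs⟩ := hε
          have h1 : ¬ (s ≤ ε) := not_le.mpr hεs
          have h2 : -(v i) ≤ ε := by linarith
          have hco : ge n ε v i = 2 * ε⁻¹ * (s - ε) := by
            rw [ge_apply, fe', fe', ← hs, if_neg h1, if_pos h2, sub_zero]
          have heq : 2 * ε⁻¹ * (s - ε) = 2 * s / ε - 2 := by
            field_simp
          rw [hco, heq]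
          exact le_abs_self _
        · push_neg at hvi
          refine ⟨i, 2 * |s + v i|, min s (-(v i)), by positivity,
            lt_min hspos (by linarith), fun ε hε => ?_⟩
          obtain ⟨hε0, hεδ⟩ := hε
          have hεs : ε < s := lt_of_lt_of_le hεδ (min_le_left _ _)
          have hεv : ε < -(v i) := lt_of_lt_of_le hεδ (min_le_right _ _)
          have hco : ge n ε v i = 2 * ε⁻¹ * (s + v i) := by
            rw [ge_apply, fe', fe', ← hs, if_neg (not_le.mpr hεs),
              if_neg (not_le.mpr hεv)]
            ring
          have habs : |ge n ε v i| = 2 * ε⁻¹ * |s + v i| := by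
            rw [hco, abs_mul, abs_of_pos (by positivity : (0:ℝ) < 2 * ε⁻¹)]
          have heq : 2 * |s + v i| / ε = 2 * ε⁻¹ * |s + v i| := by
            rw [div_eq_mul_inv]; ring
          rw [habs, ← heq]
          linarith
      · push_neg at hspos
        have h1 : ∑ j, v j ≤ 1 := by linarith
        have hex : ∃ i, v i < 0 := by
          by_contra hall
          push_neg at hall
          exact hv ⟨hall, h1⟩
        obtain ⟨i, hi⟩ := hex
        refine ⟨i, 2 * (-(v i)), -(v i), by linarith, by linarith,
          fun ε hε => ?_⟩
        obtain ⟨hε0, hεδ⟩ := hε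
        have h2 : s ≤ ε := by linarith
        have h3 : ¬ (-(v i) ≤ ε) := not_le.mpr hεδ
        have hco : ge n ε v i = -(2 * ε⁻¹ * (-(v i) - ε)) := by
          rw [ge_apply, fe', fe', ← hs, if_pos h2, if_neg h3, zero_sub]
        rw [hco, abs_neg, abs_of_nonneg (by
          have : (0:ℝ) ≤ -(v i) - ε := by linarith
          positivity)]
        have heq : 2 * ε⁻¹ * (-(v i) - ε) = 2 * (-(v i)) / ε - 2 := by
          field_simp
        rw [heq]
    obtain ⟨i, C, δ, hC, hδ, hkey⟩ := key
    have hmono : ∀ᶠ ε in nhdsWithin 0 (Set.Ioi 0), C / ε - 2 ≤ ‖ge n ε v‖ := by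
      filter_upwards [Ioo_mem_nhdsGT_of_mem ⟨le_refl (0:ℝ), hδ⟩] with ε hε
      exact (hkey ε hε).trans (abs_apply_le_norm _ i)
    refine Filter.tendsto_atTop_mono' _ hmono ?_
    have h2 : Filter.Tendsto (fun ε : ℝ => C / ε) (nhdsWithin 0 (Set.Ioi 0))
        Filter.atTop := by
      simpa [div_eq_mul_inv] using tendsto_inv_nhdsGT_zero.const_mul_atTop hC
    simpa [sub_eq_add_neg] using Filter.tendsto_atTop_add_const_right _ (-2) h2
end

section
/- Let n ≥ 1. There exists a constant C depending only on n such that for every ε ∈ (0,1] and every u ∈ ℝⁿ, ‖u‖ ≤ F_ε(u) + C, where ‖·‖ is the Euclidean norm. -/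
lemma fe_nonneg (ε z : ℝ) (hε : 0 < ε) : 0 ≤ fe ε z := by
  unfold fe
  split
  · exact le_refl 0
  · positivity

lemma fe_ge_lin (ε z : ℝ) (hε : 0 < ε) (hε1 : ε ≤ 1) : z - 2 ≤ fe ε z := by
  unfold fe
  split
  · linarith
  · rename_i h
    push_neg at h
    rcases le_or_gt z 2 with hz | hz
    · have : 0 ≤ ε⁻¹ * (z - ε) ^ 2 := by positivity
      linarith
    · have h1 : (1:ℝ) ≤ ε⁻¹ := one_le_inv_iff₀.mpr ⟨hε, hε1⟩
      have h2 : (z - 1) ^ 2 ≤ (z - ε) ^ 2 := by nlinarith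
      have h3 : z - 2 ≤ (z - 1) ^ 2 := by nlinarith
      have h4 : (z - ε) ^ 2 ≤ ε⁻¹ * (z - ε) ^ 2 := by nlinarith
      linarith

lemma fe_ge_lin2 (ε z : ℝ) (hε : 0 < ε) (hε1 : ε ≤ 1) : 2 * z - 8 ≤ fe ε z := by
  unfold fe
  split
  · linarith
  · rename_i h
    push_neg at h
    rcases le_or_gt z 4 with hz | hz
    · have : 0 ≤ ε⁻¹ * (z - ε) ^ 2 := by positivity
      linarith
    · have h1 : (1:ℝ) ≤ ε⁻¹ := one_le_inv_iff₀.mpr ⟨hε, hε1⟩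
      have h2 : (z - 1) ^ 2 ≤ (z - ε) ^ 2 := by nlinarith
      have h3 : 2 * z - 8 ≤ (z - 1) ^ 2 := by nlinarith
      have h4 : (z - ε) ^ 2 ≤ ε⁻¹ * (z - ε) ^ 2 := by nlinarith
      linarith

theorem stmt_9 (n : ℕ) (hn : 1 ≤ n) :
    ∃ C : ℝ, ∀ ε ∈ Set.Ioc (0 : ℝ) 1, ∀ u : EuclideanSpace ℝ (Fin n),
      ‖u‖ ≤ Fe n ε u + C := by
  refine ⟨8 * n + 3, ?_⟩
  rintro ε ⟨hε, hε1⟩ u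
  have hnorm : ‖u‖ ≤ ∑ i, |u i| := by
    rw [EuclideanSpace.norm_eq]
    have h1 : ∑ i, ‖u i‖ ^ 2 ≤ (∑ i, ‖u i‖) ^ 2 :=
      Finset.sum_sq_le_sq_sum_of_nonneg (fun i _ => norm_nonneg _)
    calc Real.sqrt (∑ i, ‖u i‖ ^ 2) ≤ Real.sqrt ((∑ i, ‖u i‖) ^ 2) :=
          Real.sqrt_le_sqrt h1
      _ = ∑ i, ‖u i‖ := Real.sqrt_sq (by positivity)
      _ = ∑ i, |u i| := by simp [Real.norm_eq_abs]
  have hi : ∀ i : Fin n, |u i| ≤ u i + fe ε (-(u i)) + 8 := by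
    intro i
    have h2 := fe_ge_lin2 ε (-(u i)) hε hε1
    have h0 := fe_nonneg ε (-(u i)) hε
    rcases abs_cases (u i) with ⟨h, _⟩ | ⟨h, _⟩ <;> linarith
  have hsum : ∑ i, |u i| ≤ (∑ i, u i) + (∑ i, fe ε (-(u i))) + 8 * n := by
    calc ∑ i, |u i| ≤ ∑ i, (u i + fe ε (-(u i)) + 8) :=
          Finset.sum_le_sum (fun i _ => hi i)
      _ = (∑ i, u i) + (∑ i, fe ε (-(u i))) + 8 * n := by
          simp [Finset.sum_add_distrib, mul_comm]
  have hS := fe_ge_lin ε (∑ i, u i - 1) hε hε1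
  have : (∑ i, u i) ≤ fe ε (∑ i, u i - 1) + 3 := by linarith
  unfold Fe
  linarith
end

section
/- Let n ≥ 1, let C be a nonempty closed convex subset of ℝⁿ, let δ > 0, and define M : ℝⁿ → ℝ by M(z) := (dist(z, C))³ − δ³. Then M is differentiable at every point z ∈ ℝⁿ, and the Euclidean norm of its gradient satisfies ‖∇M(z)‖ = 3·(dist(z, C))² = 3·(M(z) + δ³)^{2/3}. -/
open Metric InnerProductSpace

local notation "⟪" x ", " y "⟫" => @inner ℝ _ _ x y

section aux

variable {F : Type*} [NormedAddCommGroup F] [InnerProductSpace ℝ F] [CompleteSpace F]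
  [ProperSpace F]

/-- At a point of `C`, the cube of the distance has gradient `0`. -/
lemma hasGradientAt_infDist_cube_of_mem {C : Set F} {z : F} (hz : z ∈ C) :
    HasGradientAt (fun y => (infDist y C) ^ 3) (0 : F) z := by
  rw [hasGradientAt_iff_hasFDerivAt]
  have h0 : infDist z C = 0 := infDist_zero_of_mem hz
  rw [hasFDerivAt_iff_isLittleO_nhds_zero]
  rw [Asymptotics.isLittleO_iff]
  intro ε hε
  have key : ∀ h : F, ‖h‖ ≤ Real.sqrt ε →
      ‖(infDist (z + h) C) ^ 3 - (infDist z C) ^ 3 - (toDual ℝ F 0) h‖ ≤ ε * ‖h‖ := by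
    intro h hh
    simp only [map_zero, ContinuousLinearMap.zero_apply, h0]
    have hd : infDist (z + h) C ≤ ‖h‖ := by
      have := infDist_le_dist_of_mem (x := z + h) hz
      rwa [dist_eq_norm, add_sub_cancel_left] at this
    have hd0 : 0 ≤ infDist (z + h) C := infDist_nonneg
    have h1 : (infDist (z + h) C) ^ 3 ≤ ‖h‖ ^ 3 := pow_le_pow_left₀ hd0 hd 3
    have h2 : ‖h‖ ^ 2 ≤ ε := by
      have := Real.sq_sqrt hε.le
      nlinarith [norm_nonneg h, Real.sqrt_nonneg ε]
    have h3 : ‖h‖ ^ 3 ≤ ε * ‖h‖ := by nlinarith [norm_nonneg h]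
    have hcalc : (infDist (z + h) C) ^ 3 - (0 : ℝ) ^ 3 - 0 = (infDist (z + h) C) ^ 3 := by
      ring
    rw [hcalc, Real.norm_eq_abs, abs_of_nonneg (by positivity)]
    linarith
  filter_upwards [Metric.closedBall_mem_nhds (0 : F) (Real.sqrt_pos.mpr hε)] with h hh
  exact key h (by simpa [Metric.mem_closedBall, dist_zero_right] using hh)

/-- Outside `C`, the distance to a closed convex set has gradient the unit vector
pointing away from the projection. -/
lemma hasGradientAt_infDist_of_not_mem {C : Set F} (hne : C.Nonempty)
    (hconv : Convex ℝ C) {z p : F} (hp : p ∈ C) (hdz : infDist z C = dist z p) (hz : z ∉ C) :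
    HasGradientAt (fun y => infDist y C) ((‖z - p‖⁻¹) • (z - p)) z := by
  set v : F := z - p with hv
  have hvne : v ≠ 0 := sub_ne_zero.mpr (fun h => hz (h ▸ hp))
  have hvpos : (0 : ℝ) < ‖v‖ := norm_pos_iff.mpr hvne
  set u : F := ‖v‖⁻¹ • v with hu
  have hun : ‖u‖ = 1 := by
    rw [hu, norm_smul, norm_inv, norm_norm, inv_mul_cancel₀ hvpos.ne']
  -- The obtuse angle condition at the projection point.
  have hobtuse : ∀ c ∈ C, ⟪v, c - p⟫ ≤ 0 := by
    have hmin : ‖z - p‖ = ⨅ w : C, ‖z - w‖ := by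
      have : Nonempty C := hne.to_subtype
      rw [← dist_eq_norm, ← hdz, infDist_eq_iInf]
      congr 1; ext w; rw [dist_eq_norm]
    exact (norm_eq_iInf_iff_real_inner_le_zero hconv hp).mp hmin
  have huobtuse : ∀ c ∈ C, ⟪u, c - p⟫ ≤ 0 := by
    intro c hc
    rw [hu, real_inner_smul_left]
    exact mul_nonpos_of_nonneg_of_nonpos (by positivity) (hobtuse c hc)
  -- lower bound : ⟪u, y - p⟫ ≤ infDist y C for all y
  have hlow : ∀ y : F, ⟪u, y - p⟫ ≤ infDist y C := by
    intro y
    have : Nonempty C := hne.to_subtype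
    rw [infDist_eq_iInf]
    refine le_ciInf fun c => ?_
    have h1 : ⟪u, y - p⟫ = ⟪u, y - c⟫ + ⟪u, (c : F) - p⟫ := by
      rw [← inner_add_right]; congr 1; abel
    have h2 : ⟪u, y - c⟫ ≤ ‖y - (c : F)‖ := by
      calc ⟪u, y - c⟫ ≤ ‖u‖ * ‖y - (c : F)‖ := real_inner_le_norm _ _
        _ = ‖y - (c : F)‖ := by rw [hun, one_mul]
    rw [dist_eq_norm]
    have := huobtuse c c.2
    linarith
  -- upper bound: infDist y C ≤ ‖y - p‖
  have hup : ∀ y : F, infDist y C ≤ ‖y - p‖ := fun y => by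
    simpa [dist_eq_norm] using infDist_le_dist_of_mem (x := y) hp
  have huv : ⟪u, v⟫ = ‖v‖ := by
    rw [hu, real_inner_smul_left, real_inner_self_eq_norm_sq]
    field_simp
  rw [hasGradientAt_iff_hasFDerivAt, hasFDerivAt_iff_isLittleO_nhds_zero,
    Asymptotics.isLittleO_iff]
  intro ε hε
  have key : ∀ h : F, ‖h‖ ≤ min (‖v‖ / 2) (2 * ε * ‖v‖) →
      ‖infDist (z + h) C - infDist z C - (toDual ℝ F u) h‖ ≤ ε * ‖h‖ := by
    intro h hh
    have hh1 : ‖h‖ ≤ ‖v‖ / 2 := le_trans hh (min_le_left _ _)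
    have hh2 : ‖h‖ ≤ 2 * ε * ‖v‖ := le_trans hh (min_le_right _ _)
    have htd : (toDual ℝ F u) h = ⟪u, h⟫ := rfl
    have hdz' : infDist z C = ‖v‖ := by rw [hdz, dist_eq_norm]
    have hzp : z + h - p = v + h := by rw [hv]; abel
    -- lower bound for the difference
    have hlb : (0 : ℝ) ≤ infDist (z + h) C - infDist z C - ⟪u, h⟫ := by
      have := hlow (z + h)
      rw [hzp, inner_add_right, huv] at this
      linarith [this, hdz'.ge, hdz'.le]
    -- upper bound for the difference
    have hub : infDist (z + h) C - infDist z C - ⟪u, h⟫ ≤ ‖h‖ ^ 2 / (2 * ‖v‖) := by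
      have hup' : infDist (z + h) C ≤ ‖v + h‖ := by
        have := hup (z + h); rwa [hzp] at this
      have hnorm : ‖v + h‖ ≤ ‖v‖ + ⟪u, h⟫ + ‖h‖ ^ 2 / (2 * ‖v‖) := by
        have hvh : ⟪u, h⟫ = ‖v‖⁻¹ * ⟪v, h⟫ := by rw [hu, real_inner_smul_left]
        have hsq : ‖v + h‖ ^ 2 = ‖v‖ ^ 2 + 2 * ⟪v, h⟫ + ‖h‖ ^ 2 := by
          rw [← real_inner_self_eq_norm_sq, inner_add_add_self,
            real_inner_self_eq_norm_sq, real_inner_self_eq_norm_sq,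
            real_inner_comm h v]
          ring
        have habs : |⟪u, h⟫| ≤ ‖h‖ := by
          calc |⟪u, h⟫| ≤ ‖u‖ * ‖h‖ := abs_real_inner_le_norm _ _
            _ = ‖h‖ := by rw [hun, one_mul]
        have hrhs : (0 : ℝ) ≤ ‖v‖ + ⟪u, h⟫ + ‖h‖ ^ 2 / (2 * ‖v‖) := by
          have h1 : -‖h‖ ≤ ⟪u, h⟫ := (abs_le.mp habs).1
          have h2 : (0 : ℝ) ≤ ‖h‖ ^ 2 / (2 * ‖v‖) := by positivity
          linarith
        have hmul : ‖v‖ * ⟪u, h⟫ = ⟪v, h⟫ := by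
          rw [hvh]; field_simp
        have hdivmul : ‖h‖ ^ 2 / (2 * ‖v‖) * (2 * ‖v‖) = ‖h‖ ^ 2 := by
          field_simp
        have hsq2 : ‖v + h‖ ^ 2 ≤ (‖v‖ + ⟪u, h⟫ + ‖h‖ ^ 2 / (2 * ‖v‖)) ^ 2 := by
          have expand : (‖v‖ + ⟪u, h⟫ + ‖h‖ ^ 2 / (2 * ‖v‖)) ^ 2
              = ‖v‖ ^ 2 + 2 * ⟪v, h⟫ + ‖h‖ ^ 2
                + (⟪u, h⟫ + ‖h‖ ^ 2 / (2 * ‖v‖)) ^ 2 := by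
            linear_combination 2 * hmul + hdivmul
          rw [expand, hsq]
          linarith [sq_nonneg (⟪u, h⟫ + ‖h‖ ^ 2 / (2 * ‖v‖))]
        have := Real.sqrt_le_sqrt hsq2
        rwa [Real.sqrt_sq (norm_nonneg _), Real.sqrt_sq hrhs] at this
      linarith [hup', hdz'.le, hdz'.ge]
    have hubε : infDist (z + h) C - infDist z C - ⟪u, h⟫ ≤ ε * ‖h‖ := by
      have : ‖h‖ ^ 2 / (2 * ‖v‖) ≤ ε * ‖h‖ := by
        rw [div_le_iff₀ (by positivity)]
        nlinarith [norm_nonneg h]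
      linarith
    rw [htd, Real.norm_eq_abs, abs_of_nonneg hlb]
    exact hubε
  have hr : (0 : ℝ) < min (‖v‖ / 2) (2 * ε * ‖v‖) := by positivity
  filter_upwards [Metric.closedBall_mem_nhds (0 : F) hr] with h hh
  exact key h (by simpa [Metric.mem_closedBall, dist_zero_right] using hh)

lemma aux_cube {C : Set F} (hne : C.Nonempty) (hclosed : IsClosed C) (hconv : Convex ℝ C)
    (z : F) : ∃ g : F, HasGradientAt (fun y => (infDist y C) ^ 3) g z ∧
      ‖g‖ = 3 * (infDist z C) ^ 2 := by
  by_cases hz : z ∈ C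
  · refine ⟨0, hasGradientAt_infDist_cube_of_mem hz, ?_⟩
    rw [infDist_zero_of_mem hz]; simp
  · obtain ⟨p, hp, hdz⟩ := hclosed.exists_infDist_eq_dist hne z
    set v : F := z - p with hv
    have hvne : v ≠ 0 := sub_ne_zero.mpr (fun h => hz (h ▸ hp))
    have hvpos : (0 : ℝ) < ‖v‖ := norm_pos_iff.mpr hvne
    set u : F := ‖v‖⁻¹ • v with hu
    have hun : ‖u‖ = 1 := by
      rw [hu, norm_smul, norm_inv, norm_norm, inv_mul_cancel₀ hvpos.ne']
    have hgrad : HasGradientAt (fun y => infDist y C) u z :=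
      hasGradientAt_infDist_of_not_mem hne hconv hp hdz hz
    have hfd : HasFDerivAt (fun y => infDist y C) (toDual ℝ F u) z :=
      hasGradientAt_iff_hasFDerivAt.mp hgrad
    set d : ℝ := infDist z C with hd
    have hpow : HasDerivAt (fun x : ℝ => x ^ 3) (3 * d ^ 2) d := by
      simpa using hasDerivAt_pow 3 d
    have hcomp : HasFDerivAt (fun y => (infDist y C) ^ 3)
        ((3 * d ^ 2) • toDual ℝ F u) z := by
      have := hpow.comp_hasFDerivAt z hfd; exact this
    refine ⟨(3 * d ^ 2) • u, ?_, ?_⟩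
    · rw [hasGradientAt_iff_hasFDerivAt, map_smul]
      exact hcomp
    · rw [norm_smul, hun, mul_one, Real.norm_eq_abs, abs_of_nonneg (by positivity)]

end aux

theorem stmt_16 (n : ℕ) (hn : 1 ≤ n) (C : Set (EuclideanSpace ℝ (Fin n)))
    (hne : C.Nonempty) (hclosed : IsClosed C) (hconv : Convex ℝ C)
    (δ : ℝ) (hδ : 0 < δ) :
    ∀ z : EuclideanSpace ℝ (Fin n), ∃ g : EuclideanSpace ℝ (Fin n),
      HasGradientAt (fun y => (Metric.infDist y C) ^ 3 - δ ^ 3) g z ∧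
      ‖g‖ = 3 * (Metric.infDist z C) ^ 2 ∧
      ‖g‖ = 3 * (((Metric.infDist z C) ^ 3 - δ ^ 3 + δ ^ 3) ^ ((2 : ℝ) / 3)) := by
  intro z
  obtain ⟨g, hg, hgnorm⟩ := aux_cube hne hclosed hconv z
  refine ⟨g, ?_, hgnorm, ?_⟩
  · have : HasFDerivAt (fun y => (infDist y C) ^ 3 - δ ^ 3)
        (toDual ℝ (EuclideanSpace ℝ (Fin n)) g) z :=
      (hasGradientAt_iff_hasFDerivAt.mp hg).sub_const _
    exact hasGradientAt_iff_hasFDerivAt.mpr this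
  · rw [hgnorm]
    congr 1
    have hd0 : (0 : ℝ) ≤ infDist z C := infDist_nonneg
    rw [sub_add_cancel, ← Real.rpow_natCast (infDist z C) 3, ← Real.rpow_mul hd0]
    norm_num
end
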